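/- Let A ⊆ Ag and let L1, L2 be logics such that L1(α) = L2(α) + 4 for α ∈ A and L1(α) = L2(α) otherwise, where each L2(α) includes at most the frame conditions D, T, B. Let t^4_A be the translation defined by t^4_A([α]ψ) = Inv^α([α]t^4_A(ψ)) and t^4_A(⟨α⟩ψ) = Eve^α(⟨α⟩t^4_A(ψ)) for α ∈ A, and commuting with all other formula constructors. Then a closed formula φ is L1-satisfiable if and only if t^4_A(φ) is L2-satisfiable. -/

import Mathlib

/-- Formulas of the multi-agent modal μ-calculus. -/
inductive Formula (Ag PVar LVar : Type) : Type
  | prop  : PVar → Formula Ag PVar LVar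
  | nprop : PVar → Formula Ag PVar LVar
  | tt    : Formula Ag PVar LVar
  | ff    : Formula Ag PVar LVar
  | var   : LVar → Formula Ag PVar LVar
  | and   : Formula Ag PVar LVar → Formula Ag PVar LVar → Formula Ag PVar LVar
  | or    : Formula Ag PVar LVar → Formula Ag PVar LVar → Formula Ag PVar LVar
  | dia   : Ag → Formula Ag PVar LVar → Formula Ag PVar LVar
  | box   : Ag → Formula Ag PVar LVar → Formula Ag PVar LVar
  | mu    : LVar → Formula Ag PVar LVar → Formula Ag PVar LVar
  | nu    : LVar → Formula Ag PVar LVar → Formula Ag PVar LVar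
  deriving DecidableEq

/-- A Kripke model: a nonempty set of states, an accessibility relation per agent,
and a propositional valuation. -/
structure KModel (Ag PVar : Type) where
  W : Type
  h_ne : Nonempty W
  R : Ag → W → W → Prop
  V : W → Set PVar

variable {Ag PVar LVar : Type}

/-- The μ-calculus semantics of a formula relative to an environment. -/
def Formula.sem [DecidableEq LVar] (M : KModel Ag PVar) :
    Formula Ag PVar LVar → (LVar → Set M.W) → Set M.W
  | .prop p, _ => {s | p ∈ M.V s}
  | .nprop p, _ => {s | p ∉ M.V s}
  | .tt, _ => Set.univ
  | .ff, _ => ∅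
  | .var X, ρ => ρ X
  | .and φ ψ, ρ => Formula.sem M φ ρ ∩ Formula.sem M ψ ρ
  | .or φ ψ, ρ => Formula.sem M φ ρ ∪ Formula.sem M ψ ρ
  | .box a φ, ρ => {s | ∀ t, M.R a s t → t ∈ Formula.sem M φ ρ}
  | .dia a φ, ρ => {s | ∃ t, M.R a s t ∧ t ∈ Formula.sem M φ ρ}
  | .mu X φ, ρ => ⋂₀ {S | Formula.sem M φ (Function.update ρ X S) ⊆ S}
  | .nu X φ, ρ => ⋃₀ {S | S ⊆ Formula.sem M φ (Function.update ρ X S)}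

/-- Free recursion variables of a formula. -/
def Formula.freeVars : Formula Ag PVar LVar → Set LVar
  | .var X => {X}
  | .and φ ψ => Formula.freeVars φ ∪ Formula.freeVars ψ
  | .or φ ψ => Formula.freeVars φ ∪ Formula.freeVars ψ
  | .dia _ φ => Formula.freeVars φ
  | .box _ φ => Formula.freeVars φ
  | .mu X φ => Formula.freeVars φ \ {X}
  | .nu X φ => Formula.freeVars φ \ {X}
  | _ => ∅

/-- A formula is closed when it has no free recursion variables. -/
def Formula.Closed (φ : Formula Ag PVar LVar) : Prop := φ.freeVars = ∅

/-- Frame conditions D (serial), T (reflexive), B (symmetric), 4 (transitive), 5 (euclidean). -/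
inductive FrameCond : Type
  | D | T | B | four | five
  deriving DecidableEq

/-- A binary relation `R` satisfies a frame condition. -/
def SatisfiesCond {W : Type} (R : W → W → Prop) : FrameCond → Prop
  | .D => ∀ s, ∃ t, R s t
  | .T => ∀ s, R s s
  | .B => ∀ s t, R s t → R t s
  | .four => ∀ s t u, R s t → R t u → R s u
  | .five => ∀ s t u, R s t → R s u → R t u

/-- A logic assigns a set of frame conditions to each agent;
a model is an L-model when each agent's relation satisfies the agent's conditions. -/
def IsLModel (L : Ag → Set FrameCond) (M : KModel Ag PVar) : Prop :=
  ∀ a : Ag, ∀ c ∈ L a, SatisfiesCond (M.R a) c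

/-- A formula is L-satisfiable when it holds at some state of some L-model. -/
def LSatisfiable [DecidableEq LVar] (L : Ag → Set FrameCond)
    (φ : Formula Ag PVar LVar) : Prop :=
  ∃ (M : KModel Ag PVar), IsLModel L M ∧
    ∃ (w : M.W) (ρ : LVar → Set M.W), w ∈ Formula.sem M φ ρ

/-- Finite conjunction of a list of formulas (empty conjunction is tt). -/
def bigAnd : List (Formula Ag PVar LVar) → Formula Ag PVar LVar
  | [] => .tt
  | φ :: l => .and φ (bigAnd l)

/-- Syntactic negation, defined by the usual dualities. -/
def Formula.neg : Formula Ag PVar LVar → Formula Ag PVar LVar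
  | .prop p => .nprop p
  | .nprop p => .prop p
  | .tt => .ff
  | .ff => .tt
  | .var X => .var X
  | .and φ ψ => .or (Formula.neg φ) (Formula.neg ψ)
  | .or φ ψ => .and (Formula.neg φ) (Formula.neg ψ)
  | .dia a φ => .box a (Formula.neg φ)
  | .box a φ => .dia a (Formula.neg φ)
  | .mu X φ => .nu X (Formula.neg φ)
  | .nu X φ => .mu X (Formula.neg φ)

/-- Implication φ → ψ, encoded as ¬φ ∨ ψ. -/
def Formula.impl (φ ψ : Formula Ag PVar LVar) : Formula Ag PVar LVar := .or φ.neg ψ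

/-- The list of all variables (free or bound) occurring in a formula. -/
def Formula.varsList : Formula Ag PVar LVar → List LVar
  | .var X => [X]
  | .and φ ψ => Formula.varsList φ ++ Formula.varsList ψ
  | .or φ ψ => Formula.varsList φ ++ Formula.varsList ψ
  | .dia _ φ => Formula.varsList φ
  | .box _ φ => Formula.varsList φ
  | .mu X φ => X :: Formula.varsList φ
  | .nu X φ => X :: Formula.varsList φ
  | _ => []

/-- A recursion variable not occurring in φ (taking LVar = ℕ). -/
def freshVar (φ : Formula Ag PVar ℕ) : ℕ := (φ.varsList.foldr max 0) + 1

/-- The transitivity translation t^4_A: t^4_A([α]ψ) = Inv^α([α]t^4_A(ψ)) and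
t^4_A(⟨α⟩ψ) = Eve^α(⟨α⟩t^4_A(ψ)) for α ∈ A (with Inv^α(χ) = νX.(χ ∧ [α]X) and
Eve^α(χ) = μX.(χ ∨ ⟨α⟩X) for a fresh X), commuting with all other constructors. -/
def t4 [DecidableEq Ag] (A : Finset Ag) : Formula Ag PVar ℕ → Formula Ag PVar ℕ
  | .box a φ =>
      if a ∈ A then
        let χ : Formula Ag PVar ℕ := .box a (t4 A φ)
        let X : ℕ := freshVar χ
        .nu X (.and χ (.box a (.var X)))
      else .box a (t4 A φ)
  | .dia a φ =>
      if a ∈ A then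
        let χ : Formula Ag PVar ℕ := .dia a (t4 A φ)
        let X : ℕ := freshVar χ
        .mu X (.or χ (.dia a (.var X)))
      else .dia a (t4 A φ)
  | .and φ ψ => .and (t4 A φ) (t4 A ψ)
  | .or φ ψ => .or (t4 A φ) (t4 A ψ)
  | .mu X φ => .mu X (t4 A φ)
  | .nu X φ => .nu X (t4 A φ)
  | φ => φ


section AuxT4

variable {Ag PVar : Type}

lemma sem_congr {LVar : Type} [DecidableEq LVar] (M : KModel Ag PVar)
    (φ : Formula Ag PVar LVar) : ∀ ρ ρ' : LVar → Set M.W,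
    (∀ X ∈ φ.freeVars, ρ X = ρ' X) → Formula.sem M φ ρ = Formula.sem M φ ρ' := by
  induction φ with
  | prop p => intro _ _ _; rfl
  | nprop p => intro _ _ _; rfl
  | tt => intro _ _ _; rfl
  | ff => intro _ _ _; rfl
  | var X => intro ρ ρ' h; exact h X rfl
  | and φ ψ ihφ ihψ =>
    intro ρ ρ' h
    simp only [Formula.sem]
    rw [ihφ ρ ρ' (fun X hX => h X (Or.inl hX)), ihψ ρ ρ' (fun X hX => h X (Or.inr hX))]
  | or φ ψ ihφ ihψ =>
    intro ρ ρ' h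
    simp only [Formula.sem]
    rw [ihφ ρ ρ' (fun X hX => h X (Or.inl hX)), ihψ ρ ρ' (fun X hX => h X (Or.inr hX))]
  | dia a φ ih =>
    intro ρ ρ' h
    simp only [Formula.sem]
    rw [ih ρ ρ' h]
  | box a φ ih =>
    intro ρ ρ' h
    simp only [Formula.sem]
    rw [ih ρ ρ' h]
  | mu X ψ ih =>
    intro ρ ρ' h
    simp only [Formula.sem]
    have : {S | Formula.sem M ψ (Function.update ρ X S) ⊆ S}
        = {S | Formula.sem M ψ (Function.update ρ' X S) ⊆ S} := by
      ext S
      have := ih (Function.update ρ X S) (Function.update ρ' X S) (by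
        intro Y hY
        by_cases hYX : Y = X
        · subst hYX; simp
        · rw [Function.update_of_ne hYX, Function.update_of_ne hYX]
          exact h Y ⟨hY, hYX⟩)
      rw [Set.mem_setOf_eq, Set.mem_setOf_eq, this]
    rw [this]
  | nu X ψ ih =>
    intro ρ ρ' h
    simp only [Formula.sem]
    have : {S | S ⊆ Formula.sem M ψ (Function.update ρ X S)}
        = {S | S ⊆ Formula.sem M ψ (Function.update ρ' X S)} := by
      ext S
      have := ih (Function.update ρ X S) (Function.update ρ' X S) (by
        intro Y hY
        by_cases hYX : Y = X
        · subst hYX; simp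
        · rw [Function.update_of_ne hYX, Function.update_of_ne hYX]
          exact h Y ⟨hY, hYX⟩)
      rw [Set.mem_setOf_eq, Set.mem_setOf_eq, this]
    rw [this]

lemma mem_varsList_of_mem_freeVars {LVar : Type} {φ : Formula Ag PVar LVar} {X : LVar}
    (h : X ∈ φ.freeVars) : X ∈ φ.varsList := by
  induction φ with
  | prop p => simp [Formula.freeVars] at h
  | nprop p => simp [Formula.freeVars] at h
  | tt => simp [Formula.freeVars] at h
  | ff => simp [Formula.freeVars] at h
  | var Y => simp [Formula.freeVars] at h; simp [Formula.varsList, h]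
  | and φ ψ ihφ ihψ =>
    rcases h with h | h
    · exact List.mem_append.mpr (Or.inl (ihφ h))
    · exact List.mem_append.mpr (Or.inr (ihψ h))
  | or φ ψ ihφ ihψ =>
    rcases h with h | h
    · exact List.mem_append.mpr (Or.inl (ihφ h))
    · exact List.mem_append.mpr (Or.inr (ihψ h))
  | dia a φ ih => exact ih h
  | box a φ ih => exact ih h
  | mu Y φ ih => exact List.mem_cons.mpr (Or.inr (ih h.1))
  | nu Y φ ih => exact List.mem_cons.mpr (Or.inr (ih h.1))

lemma le_foldr_max {l : List ℕ} {x : ℕ} (h : x ∈ l) : x ≤ l.foldr max 0 := by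
  induction l with
  | nil => simp at h
  | cons y l ih =>
    rcases List.mem_cons.mp h with rfl | h
    · exact le_max_left _ _
    · exact le_trans (ih h) (le_max_right _ _)

lemma freshVar_not_mem (φ : Formula Ag PVar ℕ) : freshVar φ ∉ φ.varsList := by
  intro h
  have := le_foldr_max h
  unfold freshVar at this
  omega

lemma sem_update_fresh (M : KModel Ag PVar) (φ : Formula Ag PVar ℕ)
    {X : ℕ} (hX : X ∉ φ.varsList) (ρ : ℕ → Set M.W) (S : Set M.W) :
    Formula.sem M φ (Function.update ρ X S) = Formula.sem M φ ρ := by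
  apply sem_congr
  intro Y hY
  have hne : Y ≠ X := fun h => hX (h ▸ mem_varsList_of_mem_freeVars hY)
  rw [Function.update_of_ne hne]

/-- Transitive-closure model on agents in A. -/
def tcModel [DecidableEq Ag] (A : Finset Ag) (M : KModel Ag PVar) : KModel Ag PVar :=
  ⟨M.W, M.h_ne, fun a => if a ∈ A then Relation.TransGen (M.R a) else M.R a, M.V⟩

lemma sem_eq_of_R_eq {W : Type} (h : Nonempty W) (R R' : Ag → W → W → Prop)
    (V : W → Set PVar) (hR : R = R') (φ : Formula Ag PVar ℕ) (ρ : ℕ → Set W) :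
    Formula.sem (⟨W, h, R, V⟩ : KModel Ag PVar) φ ρ
      = Formula.sem (⟨W, h, R', V⟩ : KModel Ag PVar) φ ρ := by
  subst hR; rfl

lemma sem_t4 [DecidableEq Ag] (A : Finset Ag) (M : KModel Ag PVar)
    (φ : Formula Ag PVar ℕ) :
    ∀ ρ : ℕ → Set M.W, Formula.sem M (t4 A φ) ρ = Formula.sem (tcModel A M) φ ρ := by
  induction φ with
  | prop p => intro ρ; rfl
  | nprop p => intro ρ; rfl
  | tt => intro ρ; rfl
  | ff => intro ρ; rfl
  | var X => intro ρ; rfl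
  | and φ ψ ihφ ihψ =>
    intro ρ
    show Formula.sem M (t4 A φ) ρ ∩ Formula.sem M (t4 A ψ) ρ = _
    rw [ihφ, ihψ]; rfl
  | or φ ψ ihφ ihψ =>
    intro ρ
    show Formula.sem M (t4 A φ) ρ ∪ Formula.sem M (t4 A ψ) ρ = _
    rw [ihφ, ihψ]; rfl
  | mu X ψ ih =>
    intro ρ
    have h : {S : Set M.W | Formula.sem M (t4 A ψ) (Function.update ρ X S) ⊆ S}
        = {S : Set M.W | Formula.sem (tcModel A M) ψ (Function.update ρ X S) ⊆ S} := by
      ext S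
      rw [Set.mem_setOf_eq, Set.mem_setOf_eq, ih]
      exact Iff.rfl
    show ⋂₀ {S : Set M.W | Formula.sem M (t4 A ψ) (Function.update ρ X S) ⊆ S}
        = ⋂₀ {S : Set M.W | Formula.sem (tcModel A M) ψ (Function.update ρ X S) ⊆ S}
    rw [h]
  | nu X ψ ih =>
    intro ρ
    have h : {S : Set M.W | S ⊆ Formula.sem M (t4 A ψ) (Function.update ρ X S)}
        = {S : Set M.W | S ⊆ Formula.sem (tcModel A M) ψ (Function.update ρ X S)} := by
      ext S
      rw [Set.mem_setOf_eq, Set.mem_setOf_eq, ih]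
      exact Iff.rfl
    show ⋃₀ {S : Set M.W | S ⊆ Formula.sem M (t4 A ψ) (Function.update ρ X S)}
        = ⋃₀ {S : Set M.W | S ⊆ Formula.sem (tcModel A M) ψ (Function.update ρ X S)}
    rw [h]
  | box a ψ ih =>
    intro ρ
    by_cases ha : a ∈ A
    · set X : ℕ := freshVar (Formula.box a (t4 A ψ)) with hXdef
      have hXnm : X ∉ (t4 A ψ).varsList := freshVar_not_mem (Formula.box a (t4 A ψ))
      have ht4 : t4 A (Formula.box a ψ)
          = Formula.nu X (.and (.box a (t4 A ψ)) (.box a (.var X))) := by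
        simp only [t4, if_pos ha]
        rfl
      rw [ht4]
      have hR : (tcModel A M).R a = Relation.TransGen (M.R a) := by
        simp [tcModel, ha]
      have hsemand : ∀ S : Set M.W,
          Formula.sem M (.and (.box a (t4 A ψ)) (.box a (.var X))) (Function.update ρ X S)
            = {x | (∀ u, M.R a x u → u ∈ Formula.sem (tcModel A M) ψ ρ)
                ∧ ∀ u, M.R a x u → u ∈ S} := by
        intro S
        ext x
        simp only [Formula.sem, Set.mem_inter_iff, Set.mem_setOf_eq,
          sem_update_fresh M (t4 A ψ) hXnm, ih, Function.update_self]
        exact Iff.rfl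
      show (⋃₀ {S | S ⊆ Formula.sem M
          (.and (.box a (t4 A ψ)) (.box a (.var X))) (Function.update ρ X S)} : Set M.W)
        = {s | ∀ t, (tcModel A M).R a s t → t ∈ Formula.sem (tcModel A M) ψ ρ}
      simp only [hsemand, hR]
      ext s
      simp only [Set.mem_sUnion, Set.mem_setOf_eq]
      constructor
      · rintro ⟨S, hS, hsS⟩ t ht
        have key : t ∈ S ∧ t ∈ Formula.sem (tcModel A M) ψ ρ := by
          induction ht with
          | single h => exact ⟨(hS hsS).2 _ h, (hS hsS).1 _ h⟩
          | tail h1 h2 iht => exact ⟨(hS iht.1).2 _ h2, (hS iht.1).1 _ h2⟩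
        exact key.2
      · intro h
        refine ⟨{x | ∀ t, Relation.TransGen (M.R a) x t → t ∈ Formula.sem (tcModel A M) ψ ρ},
          ?_, h⟩
        intro x hx
        exact ⟨fun u hu => hx u (Relation.TransGen.single hu),
          fun u hu t ht => hx t (Relation.TransGen.head hu ht)⟩
    · have ht4 : t4 A (Formula.box a ψ) = Formula.box a (t4 A ψ) := by
        simp only [t4, if_neg ha]
      rw [ht4]
      have hR : (tcModel A M).R a = M.R a := by simp [tcModel, ha]
      show {s | ∀ t, M.R a s t → t ∈ Formula.sem M (t4 A ψ) ρ}
        = {s | ∀ t, (tcModel A M).R a s t → t ∈ Formula.sem (tcModel A M) ψ ρ}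
      simp only [ih, hR]
      rfl
  | dia a ψ ih =>
    intro ρ
    by_cases ha : a ∈ A
    · set X : ℕ := freshVar (Formula.dia a (t4 A ψ)) with hXdef
      have hXnm : X ∉ (t4 A ψ).varsList := freshVar_not_mem (Formula.dia a (t4 A ψ))
      have ht4 : t4 A (Formula.dia a ψ)
          = Formula.mu X (.or (.dia a (t4 A ψ)) (.dia a (.var X))) := by
        simp only [t4, if_pos ha]
        rfl
      rw [ht4]
      have hR : (tcModel A M).R a = Relation.TransGen (M.R a) := by
        simp [tcModel, ha]
      have hsemor : ∀ S : Set M.W,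
          Formula.sem M (.or (.dia a (t4 A ψ)) (.dia a (.var X))) (Function.update ρ X S)
            = {x | (∃ u, M.R a x u ∧ u ∈ Formula.sem (tcModel A M) ψ ρ)
                ∨ ∃ u, M.R a x u ∧ u ∈ S} := by
        intro S
        ext x
        simp only [Formula.sem, Set.mem_union, Set.mem_setOf_eq,
          sem_update_fresh M (t4 A ψ) hXnm, ih, Function.update_self]
        exact Iff.rfl
      show (⋂₀ {S | Formula.sem M
          (.or (.dia a (t4 A ψ)) (.dia a (.var X))) (Function.update ρ X S) ⊆ S} : Set M.W)
        = {s | ∃ t, (tcModel A M).R a s t ∧ t ∈ Formula.sem (tcModel A M) ψ ρ}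
      simp only [hsemor, hR]
      ext s
      simp only [Set.mem_sInter, Set.mem_setOf_eq]
      constructor
      · intro h
        exact h {x | ∃ t, Relation.TransGen (M.R a) x t ∧ t ∈ Formula.sem (tcModel A M) ψ ρ}
          (by
            rintro x (⟨u, hu, hT⟩ | ⟨u, hu, t, htg, hT⟩)
            · exact ⟨u, Relation.TransGen.single hu, hT⟩
            · exact ⟨t, Relation.TransGen.head hu htg, hT⟩)
      · rintro ⟨t, htg, htT⟩ S hS
        refine Relation.TransGen.head_induction_on htg ?_ ?_
        · intro x hx
          exact hS (Or.inl ⟨t, hx, htT⟩)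
        · intro x c hxc _ hc
          exact hS (Or.inr ⟨c, hxc, hc⟩)
    · have ht4 : t4 A (Formula.dia a ψ) = Formula.dia a (t4 A ψ) := by
        simp only [t4, if_neg ha]
      rw [ht4]
      have hR : (tcModel A M).R a = M.R a := by simp [tcModel, ha]
      show {s | ∃ t, M.R a s t ∧ t ∈ Formula.sem M (t4 A ψ) ρ}
        = {s | ∃ t, (tcModel A M).R a s t ∧ t ∈ Formula.sem (tcModel A M) ψ ρ}
      simp only [ih, hR]
      rfl

lemma transGen_symm {W : Type} {R : W → W → Prop} (h : ∀ s t, R s t → R t s)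
    {s t : W} (hst : Relation.TransGen R s t) : Relation.TransGen R t s := by
  induction hst with
  | single h1 => exact Relation.TransGen.single (h _ _ h1)
  | tail h1 h2 ih => exact Relation.TransGen.head (h _ _ h2) ih

end AuxT4

/-- correctness of the transitivity translation. -/
theorem transitivity_translation_correct [DecidableEq Ag]
    (A : Finset Ag) (L1 L2 : Ag → Set FrameCond)
    (hA : ∀ a ∈ A, L1 a = L2 a ∪ {FrameCond.four})
    (hA' : ∀ a ∉ A, L1 a = L2 a)
    (hL2 : ∀ a : Ag, L2 a ⊆ {FrameCond.D, FrameCond.T, FrameCond.B})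
    (φ : Formula Ag PVar ℕ) (hc : φ.Closed) :
    LSatisfiable L1 φ ↔ LSatisfiable L2 (t4 A φ) := by
  constructor
  · rintro ⟨⟨W, hne, R, V⟩, hM, w, ρ, hw⟩
    refine ⟨⟨W, hne, R, V⟩, ?_, w, ρ, ?_⟩
    · intro a c hc'
      apply hM a
      by_cases ha : a ∈ A
      · rw [hA a ha]; exact Set.mem_union_left _ hc'
      · rw [hA' a ha]; exact hc'
    · have htr : ∀ a ∈ A, Transitive (R a) := by
        intro a ha
        have h4 : SatisfiesCond (R a) FrameCond.four := by
          apply hM a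
          rw [hA a ha]
          exact Set.mem_union_right _ rfl
        exact fun x y z h1 h2 => h4 x y z h1 h2
      have heq : (fun a => if a ∈ A then Relation.TransGen (R a) else R a) = R := by
        funext a
        by_cases ha : a ∈ A
        · simp only [if_pos ha]
          haveI : IsTrans W (R a) := ⟨htr a ha⟩
          exact Relation.transGen_eq_self
        · simp only [if_neg ha]
      have h2 : Formula.sem (tcModel A (⟨W, hne, R, V⟩ : KModel Ag PVar)) φ ρ
          = Formula.sem (⟨W, hne, R, V⟩ : KModel Ag PVar) φ ρ :=
        sem_eq_of_R_eq hne _ R V heq φ ρ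
      rw [sem_t4 A (⟨W, hne, R, V⟩ : KModel Ag PVar) φ ρ, h2]
      exact hw
  · rintro ⟨M, hM, w, ρ, hw⟩
    refine ⟨tcModel A M, ?_, w, ρ, ?_⟩
    · intro a c hc'
      by_cases ha : a ∈ A
      · rw [hA a ha] at hc'
        have hRtc : (tcModel A M).R a = Relation.TransGen (M.R a) := by
          simp [tcModel, ha]
        rcases (Set.mem_union _ _ _).mp hc' with hc' | hc'
        · have hc2 := hL2 a hc'
          simp only [Set.mem_insert_iff, Set.mem_singleton_iff] at hc2
          rcases hc2 with rfl | rfl | rfl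
          · intro s
            obtain ⟨t, ht⟩ := hM a FrameCond.D hc' s
            exact ⟨t, by rw [hRtc]; exact Relation.TransGen.single ht⟩
          · intro s
            rw [hRtc]
            exact Relation.TransGen.single (hM a FrameCond.T hc' s)
          · intro s t hst
            rw [hRtc] at hst ⊢
            exact transGen_symm (hM a FrameCond.B hc') hst
        · rcases Set.mem_singleton_iff.mp hc' with rfl
          intro s t u h1 h2
          rw [hRtc] at h1 h2 ⊢
          exact Relation.TransGen.trans h1 h2
      · have hRtc : (tcModel A M).R a = M.R a := by simp [tcModel, ha]
        rw [hA' a ha] at hc'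
        rw [hRtc]
        exact hM a c hc'
    · rw [← sem_t4]
      exact hw
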